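/- arXiv:2511.05076 — 4 statements merged into one kernel-verified Lean document; each statement's English description precedes it below -/
import Mathlib

section
/- Let f(z) = 3/(1 - z) - conj(z)/(1 - |z|²) for z ∈ 𝔻. Then sup_{z∈𝔻} (1 - |z|²)|f(z)| = 5. -/
open Complex Metric ComplexConjugate

lemma key_ineq (x y : ℝ) (h : x^2+y^2 < 1) :
    (3 - 2*(x^2+y^2) - x)^2 + y^2 ≤ 25*((1-x)^2+y^2) := by
  nlinarith [sq_nonneg y, sq_nonneg (1-x), sq_nonneg (x^2+y^2-1), sq_nonneg x,
    mul_nonneg (sq_nonneg y) (le_of_lt (sub_pos.mpr h)),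
    mul_nonneg (sq_nonneg (1-x)) (le_of_lt (sub_pos.mpr h))]

lemma upper_bd (z : ℂ) (hz : ‖z‖ < 1) :
    (1 - ‖z‖^2) * ‖(3 : ℂ) / (1 - z) - conj z / ((1 : ℂ) - (‖z‖ : ℂ)^2)‖ ≤ 5 := by
  have hs : ‖z‖^2 = z.re^2 + z.im^2 := by
    rw [Complex.sq_norm, Complex.normSq_apply]; ring
  have hs1 : z.re^2 + z.im^2 < 1 := by
    rw [← hs]; nlinarith [norm_nonneg z]
  have hspos : (0:ℝ) < 1 - ‖z‖^2 := by nlinarith [norm_nonneg z]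
  have h1z : (1:ℂ) - z ≠ 0 := by
    intro h
    have : z = 1 := by linear_combination -h
    rw [this] at hz; simp at hz
  have hsC : ((1:ℂ) - (‖z‖:ℂ)^2) = ((1 - ‖z‖^2 : ℝ) : ℂ) := by push_cast; ring
  have hsne : ((1:ℂ) - (‖z‖:ℂ)^2) ≠ 0 := by
    rw [hsC]; exact Complex.ofReal_ne_zero.mpr (ne_of_gt hspos)
  set N : ℂ := 3*((1 - ‖z‖^2 : ℝ):ℂ) - (1-z) * conj z with hNdef
  have e : (3 : ℂ) / (1 - z) - conj z / ((1 : ℂ) - (‖z‖ : ℂ)^2)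
      = N / ((1-z) * ((1:ℂ) - (‖z‖:ℂ)^2)) := by
    rw [div_sub_div _ _ h1z hsne, hNdef, hsC]
  rw [e, norm_div, norm_mul, hsC, Complex.norm_real, Real.norm_eq_abs, abs_of_pos hspos]
  have hnz : (0:ℝ) < ‖(1:ℂ) - z‖ := norm_pos_iff.mpr h1z
  have hre : N.re = 3 - 2*(z.re^2+z.im^2) - z.re := by
    simp only [hNdef, Complex.sub_re, Complex.sub_im, Complex.mul_re, Complex.mul_im,
      Complex.ofReal_re, Complex.ofReal_im, Complex.one_re, Complex.one_im,
      Complex.conj_re, Complex.conj_im, Complex.re_ofNat, Complex.im_ofNat]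
    ring_nf
    rw [hs]; ring
  have him : N.im = z.im := by
    simp only [hNdef, Complex.sub_re, Complex.sub_im, Complex.mul_re, Complex.mul_im,
      Complex.ofReal_re, Complex.ofReal_im, Complex.one_re, Complex.one_im,
      Complex.conj_re, Complex.conj_im, Complex.re_ofNat, Complex.im_ofNat]
    ring
  have hNle : ‖N‖ ≤ 5 * ‖(1:ℂ) - z‖ := by
    have hsq : ‖N‖^2 ≤ (5 * ‖(1:ℂ) - z‖)^2 := by
      have h1 : ‖N‖^2 = Complex.normSq N := by
        rw [Complex.sq_norm]
      have h2 : ‖(1:ℂ)-z‖^2 = Complex.normSq (1-z) := by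
        rw [Complex.sq_norm]
      rw [mul_pow, h1, h2, Complex.normSq_apply, Complex.normSq_apply, hre, him,
        Complex.sub_re, Complex.sub_im, Complex.one_re, Complex.one_im]
      nlinarith [key_ineq z.re z.im hs1]
    have := Real.sqrt_le_sqrt hsq
    rwa [Real.sqrt_sq (norm_nonneg _), Real.sqrt_sq (by positivity)] at this
  calc (1 - ‖z‖^2) * (‖N‖ / (‖(1:ℂ) - z‖ * (1 - ‖z‖^2)))
      = ‖N‖ / ‖(1:ℂ) - z‖ := by
        rw [mul_comm ‖(1:ℂ) - z‖ (1 - ‖z‖^2), ← div_div,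
          mul_comm (1 - ‖z‖^2), div_right_comm, div_mul_cancel₀ _ (ne_of_gt hspos)]
    _ ≤ 5 := by rw [div_le_iff₀ hnz]; exact hNle

lemma mem_val (r : ℝ) (h0 : 0 ≤ r) (h1 : r < 1) :
    (3 + 2*r) ∈ {y : ℝ | ∃ z ∈ ball (0:ℂ) 1,
      y = (1 - ‖z‖^2) *
        ‖(3 : ℂ) / (1 - z) - conj z / ((1 : ℂ) - (‖z‖ : ℂ)^2)‖} := by
  refine ⟨(r:ℂ), ?_, ?_⟩
  · rw [mem_ball_zero_iff, Complex.norm_real, Real.norm_eq_abs, _root_.abs_of_nonneg h0]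
    exact h1
  · have hnr : ‖(r:ℂ)‖ = r := by
      rw [Complex.norm_real, Real.norm_eq_abs, _root_.abs_of_nonneg h0]
    rw [hnr]
    have hr1 : (0:ℝ) < 1 - r := by linarith
    have hr2 : (0:ℝ) < 1 - r^2 := by nlinarith
    have e : (3 : ℂ) / (1 - (r:ℂ)) - conj (r:ℂ) / ((1 : ℂ) - (r : ℂ)^2)
        = ((3/(1-r) - r/(1-r^2) : ℝ) : ℂ) := by
      rw [Complex.conj_ofReal]; push_cast; ring
    rw [e, Complex.norm_real, Real.norm_eq_abs]
    have hval : 3/(1-r) - r/(1-r^2) = (3+2*r)/(1-r^2) := by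
      field_simp; ring
    rw [hval, abs_of_pos (by positivity)]
    field_simp

theorem preSchwarzian_norm_logharmonic_example_eq_five :
    sSup {y : ℝ | ∃ z ∈ ball (0:ℂ) 1,
      y = (1 - ‖z‖^2) *
        ‖(3 : ℂ) / (1 - z) - conj z / ((1 : ℂ) - (‖z‖ : ℂ)^2)‖} = 5 := by
  set S := {y : ℝ | ∃ z ∈ ball (0:ℂ) 1,
      y = (1 - ‖z‖^2) *
        ‖(3 : ℂ) / (1 - z) - conj z / ((1 : ℂ) - (‖z‖ : ℂ)^2)‖} with hS
  have hub : ∀ y ∈ S, y ≤ 5 := by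
    rintro y ⟨z, hz, rfl⟩
    exact upper_bd z (by simpa [mem_ball, dist_eq_norm] using hz)
  have hbdd : BddAbove S := ⟨5, hub⟩
  refine le_antisymm (Real.sSup_le hub (by norm_num)) ?_
  by_contra h
  push_neg at h
  have h3 : (3:ℝ) ≤ sSup S := by
    have := le_csSup hbdd (mem_val 0 le_rfl one_pos)
    linarith
  set r : ℝ := (sSup S - 3)/2 with hr
  have hr0 : 0 ≤ r := by rw [hr]; linarith
  have hr1 : r < 1 := by rw [hr]; linarith
  set r' : ℝ := (r + 1)/2 with hr'
  have : 3 + 2*r' ≤ sSup S :=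
    le_csSup hbdd (mem_val r' (by rw [hr']; linarith) (by rw [hr']; linarith))
  rw [hr'] at this
  rw [hr] at this
  linarith
end

section
/- Let h, g be non-vanishing holomorphic functions on 𝔻, h'g never zero, ω = g'h/(h'g) a holomorphic self-map of 𝔻, ε ∈ closure(𝔻), and suppose β := sup_{z∈𝔻}(1-|z|²)|g'(z)/g(z)| < ∞. Then for all z ∈ 𝔻, (1-|z|²)·| |P_{hg^ε}(z)| - |P_f(z)| | ≤ 1 + |1 - ε|·β. Consequently sup_{z∈𝔻}(1-|z|²)|P_f(z)| < ∞ if and only if sup_{z∈𝔻}(1-|z|²)|P_{hg^ε}(z)| < ∞, and when finite, | ‖P_f‖ - ‖P_{hg^ε}‖ | ≤ 1 + |1-ε|·β. -/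
open Complex Metric ComplexConjugate

lemma normSq_mobius_id (a w : ℂ) :
    ‖1 + conj a * w‖^2 - ‖w + a‖^2 = (1 - ‖a‖^2) * (1 - ‖w‖^2) := by
  simp only [Complex.sq_norm, normSq_apply, add_re, add_im, mul_re, mul_im,
    one_re, one_im, conj_re, conj_im]
  ring

lemma mobius_lt_one {a w : ℂ} (ha : ‖a‖ < 1) (hw : ‖w‖ < 1) :
    ‖(w + a) / (1 + conj a * w)‖ < 1 := by
  have hid := normSq_mobius_id a w
  have hpos : (0:ℝ) < (1 - ‖a‖^2) * (1 - ‖w‖^2) :=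
    mul_pos (by nlinarith [norm_nonneg a]) (by nlinarith [norm_nonneg w])
  have h1 : ‖w + a‖ < ‖1 + conj a * w‖ :=
    lt_of_pow_lt_pow_left₀ 2 (norm_nonneg _) (by linarith)
  rw [norm_div, div_lt_one (lt_of_le_of_lt (norm_nonneg _) h1)]
  exact h1

lemma one_add_ne_zero' {u : ℂ} (hu : ‖u‖ < 1) : 1 + u ≠ 0 := by
  intro h
  have : u = -1 := by linear_combination h
  simp [this] at hu

lemma schwarzPick (f : ℂ → ℂ) (hf : DifferentiableOn ℂ f (ball (0:ℂ) 1))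
    (hmap : ∀ w ∈ ball (0:ℂ) 1, ‖f w‖ < 1) {z : ℂ} (hz : z ∈ ball (0:ℂ) 1) :
    (1 - ‖z‖^2) * ‖deriv f z‖ ≤ 1 - ‖f z‖^2 := by
  have hz1 : ‖z‖ < 1 := by simpa using hz
  set a := f z with ha
  have ha1 : ‖a‖ < 1 := hmap z hz
  have hna1 : ‖-a‖ < 1 := by simpa using ha1
  set φ : ℂ → ℂ := fun w => (w + z) / (1 + conj z * w) with hφdef
  set σ : ℂ → ℂ := fun w => (w + (-a)) / (1 + conj (-a) * w) with hσdef
  have hden : ∀ b w : ℂ, ‖b‖ < 1 → ‖w‖ < 1 → 1 + conj b * w ≠ 0 := by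
    intro b w hb hw
    apply one_add_ne_zero'
    rw [norm_mul, RCLike.norm_conj]
    nlinarith [norm_nonneg b, norm_nonneg w]
  have hφmap : Set.MapsTo φ (ball (0:ℂ) 1) (ball (0:ℂ) 1) := by
    intro w hw
    rw [mem_ball_zero_iff]
    exact mobius_lt_one hz1 (mem_ball_zero_iff.mp hw)
  have hσmap : Set.MapsTo σ (ball (0:ℂ) 1) (ball (0:ℂ) 1) := by
    intro w hw
    rw [mem_ball_zero_iff]
    exact mobius_lt_one hna1 (mem_ball_zero_iff.mp hw)
  have hfmap : Set.MapsTo f (ball (0:ℂ) 1) (ball (0:ℂ) 1) := by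
    intro w hw; simpa using hmap w hw
  have hdenφ : HasDerivAt (fun w => 1 + conj z * w) (conj z) 0 := by
    simpa using ((hasDerivAt_id (0:ℂ)).const_mul (conj z)).const_add 1
  have hdenσ : HasDerivAt (fun w => 1 + conj (-a) * w) (conj (-a)) a := by
    simpa using ((hasDerivAt_id a).const_mul (conj (-a))).const_add 1
  have hφd : DifferentiableOn ℂ φ (ball (0:ℂ) 1) := by
    apply DifferentiableOn.div
    · exact (differentiable_id.add_const z).differentiableOn
    · exact ((differentiable_id.const_mul (conj z)).const_add 1).differentiableOn
    · intro w hw; exact hden z w hz1 (by simpa using hw)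
  have hσd : DifferentiableOn ℂ σ (ball (0:ℂ) 1) := by
    apply DifferentiableOn.div
    · exact (differentiable_id.add_const (-a)).differentiableOn
    · exact ((differentiable_id.const_mul (conj (-a))).const_add 1).differentiableOn
    · intro w hw; exact hden (-a) w hna1 (by simpa using hw)
  set F : ℂ → ℂ := σ ∘ (f ∘ φ) with hFdef
  have hFd : DifferentiableOn ℂ F (ball (0:ℂ) 1) :=
    hσd.comp (hf.comp hφd hφmap) (hfmap.comp hφmap)
  have hφ0 : φ 0 = z := by simp [hφdef]
  have hF0 : F 0 = 0 := by simp [hFdef, hφ0, hσdef, ha]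
  have hFmap : Set.MapsTo F (ball (0:ℂ) 1) (ball (F 0) 1) := by
    rw [hF0]
    exact (hσmap.comp (hfmap.comp hφmap))
  have hD : ‖deriv F 0‖ ≤ 1 / 1 :=
    Complex.norm_deriv_le_div_of_mapsTo_ball hFd (hFmap.mono_right ball_subset_closedBall) one_pos
  have hφ' : HasDerivAt φ ((1 * (1 + conj z * 0) - (0 + z) * conj z) / (1 + conj z * 0)^2) 0 :=
    HasDerivAt.div ((hasDerivAt_id 0).add_const z) hdenφ
      (by simpa using hden z 0 hz1 (by simp))
  have hf' : HasDerivAt f (deriv f z) z :=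
    (hf.differentiableAt (isOpen_ball.mem_nhds hz)).hasDerivAt
  have hσ' : HasDerivAt σ
      ((1 * (1 + conj (-a) * a) - (a + -a) * conj (-a)) / (1 + conj (-a) * a)^2) a :=
    HasDerivAt.div ((hasDerivAt_id a).add_const (-a)) hdenσ (hden (-a) a hna1 ha1)
  have h1 : HasDerivAt (f ∘ φ)
      (deriv f z * ((1 * (1 + conj z * 0) - (0 + z) * conj z) / (1 + conj z * 0)^2)) 0 :=
    HasDerivAt.comp 0 (hφ0 ▸ hf') hφ'
  have hfφ0 : (f ∘ φ) 0 = a := by simp [Function.comp, hφ0, ha]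
  have h2 : HasDerivAt F
      ((1 * (1 + conj (-a) * a) - (a + -a) * conj (-a)) / (1 + conj (-a) * a)^2 *
        (deriv f z * ((1 * (1 + conj z * 0) - (0 + z) * conj z) / (1 + conj z * 0)^2))) 0 :=
    HasDerivAt.comp 0 (hfφ0 ▸ hσ') h1
  have hderivF := h2.deriv
  have hzz : z * conj z = ((‖z‖^2 : ℝ) : ℂ) := by
    rw [mul_conj]; norm_cast; rw [normSq_eq_norm_sq]
  have haa : (1:ℂ) + conj (-a) * a = ((1 - ‖a‖^2 : ℝ) : ℂ) := by
    rw [map_neg, neg_mul, mul_comm, mul_conj]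
    push_cast
    rw [normSq_eq_norm_sq]
    norm_cast
  have hapos : (0:ℝ) < 1 - ‖a‖^2 := by nlinarith [norm_nonneg a]
  have hsne : ((1 - ‖a‖^2 : ℝ) : ℂ) ≠ 0 := by
    norm_cast; exact ne_of_gt hapos
  have hz0 : (0:ℝ) ≤ 1 - ‖z‖^2 := by nlinarith [norm_nonneg z]
  have hcσ : (1 * (1 + conj (-a) * a) - (a + -a) * conj (-a)) / (1 + conj (-a) * a)^2
      = ((1 - ‖a‖^2 : ℝ) : ℂ)⁻¹ := by
    have hz' : a + -a = 0 := by ring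
    rw [haa, hz', zero_mul, sub_zero, one_mul]
    rw [eq_comm, inv_eq_one_div, div_eq_div_iff hsne (pow_ne_zero 2 hsne)]
    ring
  have hcφ : (1 * (1 + conj z * 0) - (0 + z) * conj z) / (1 + conj z * 0)^2
      = ((1 - ‖z‖^2 : ℝ) : ℂ) := by
    rw [mul_zero, add_zero, zero_add, hzz]
    push_cast
    field_simp
  rw [hcσ, hcφ] at hderivF
  rw [hderivF] at hD
  rw [norm_mul, norm_mul, norm_inv, Complex.norm_real, Complex.norm_real,
    Real.norm_eq_abs, Real.norm_eq_abs, _root_.abs_of_nonneg (le_of_lt hapos),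
    _root_.abs_of_nonneg hz0, div_self one_ne_zero] at hD
  have key : (1 - ‖a‖^2)⁻¹ * (‖deriv f z‖ * (1 - ‖z‖^2)) * (1 - ‖a‖^2)
      = ‖deriv f z‖ * (1 - ‖z‖^2) := by
    rw [mul_comm, ← mul_assoc, mul_inv_cancel₀ (ne_of_gt hapos), one_mul]
  have := mul_le_mul_of_nonneg_right hD (le_of_lt hapos)
  rw [key, one_mul] at this
  linarith [this, mul_comm (1 - ‖z‖^2) ‖deriv f z‖]

lemma quot_le_one' {e a : ℂ} (he : ‖e‖ ≤ 1) (ha : ‖a‖ < 1) :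
    ‖e + conj a‖ ≤ ‖1 + e * a‖ := by
  have hid : ‖1 + e * a‖^2 - ‖e + conj a‖^2 = (1 - ‖e‖^2) * (1 - ‖a‖^2) := by
    simp only [Complex.sq_norm, normSq_apply, add_re, add_im, mul_re, mul_im,
      one_re, one_im, conj_re, conj_im]
    ring
  have hnn : (0:ℝ) ≤ (1 - ‖e‖^2) * (1 - ‖a‖^2) :=
    mul_nonneg (by nlinarith [norm_nonneg e]) (by nlinarith [norm_nonneg a])
  nlinarith [norm_nonneg (e + conj a), norm_nonneg (1 + e * a)]

lemma transfer_sup {P Q : ℂ → ℝ} {C : ℝ}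
    (hle : ∀ z ∈ ball (0:ℂ) 1, P z ≤ Q z + C)
    (hQ : BddAbove {y : ℝ | ∃ z ∈ ball (0:ℂ) 1, y = Q z}) :
    BddAbove {y : ℝ | ∃ z ∈ ball (0:ℂ) 1, y = P z} ∧
    sSup {y : ℝ | ∃ z ∈ ball (0:ℂ) 1, y = P z} ≤
      sSup {y : ℝ | ∃ z ∈ ball (0:ℂ) 1, y = Q z} + C := by
  constructor
  · obtain ⟨M, hM⟩ := hQ
    refine ⟨M + C, ?_⟩
    rintro y ⟨z, hz, rfl⟩
    exact le_trans (hle z hz) (add_le_add_left (hM ⟨z, hz, rfl⟩) C)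
  · refine csSup_le ⟨P 0, ⟨0, mem_ball_self one_pos, rfl⟩⟩ ?_
    rintro y ⟨z, hz, rfl⟩
    exact (hle z hz).trans (add_le_add_left (le_csSup hQ ⟨z, hz, rfl⟩) C)

theorem preSchwarzian_norm_comparison_eps
    (h g : ℂ → ℂ)
    (hh : DifferentiableOn ℂ h (ball (0:ℂ) 1))
    (hg : DifferentiableOn ℂ g (ball (0:ℂ) 1))
    (hh0 : ∀ z ∈ ball (0:ℂ) 1, h z ≠ 0)
    (hg0 : ∀ z ∈ ball (0:ℂ) 1, g z ≠ 0)
    (hh'g0 : ∀ z ∈ ball (0:ℂ) 1, deriv h z * g z ≠ 0)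
    (ω : ℂ → ℂ)
    (hω : ∀ z ∈ ball (0:ℂ) 1, ω z = deriv g z * h z / (deriv h z * g z))
    (hωmap : ∀ z ∈ ball (0:ℂ) 1, ‖ω z‖ < 1)
    (ε : ℂ) (hε : ‖ε‖ ≤ 1)
    (β : ℝ)
    (hβbdd : BddAbove {y : ℝ | ∃ z ∈ ball (0:ℂ) 1,
      y = (1 - ‖z‖^2) * ‖deriv g z / g z‖})
    (hβ : β = sSup {y : ℝ | ∃ z ∈ ball (0:ℂ) 1,
      y = (1 - ‖z‖^2) * ‖deriv g z / g z‖})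
    (Pf Phgε : ℂ → ℂ)
    (hPf : ∀ z ∈ ball (0:ℂ) 1,
      Pf z = deriv (deriv h) z / deriv h z + deriv g z / g z -
        conj (ω z) * deriv ω z / (1 - (‖ω z‖ : ℂ)^2))
    (hPhgε : ∀ z ∈ ball (0:ℂ) 1,
      Phgε z = deriv (deriv h) z / deriv h z + ε * (deriv g z / g z) +
        ε * deriv ω z / (1 + ε * ω z)) :
    (∀ z ∈ ball (0:ℂ) 1,
      (1 - ‖z‖^2) * |‖Phgε z‖ - ‖Pf z‖| ≤ 1 + ‖(1 : ℂ) - ε‖ * β) ∧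
    (BddAbove {y : ℝ | ∃ z ∈ ball (0:ℂ) 1, y = (1 - ‖z‖^2) * ‖Pf z‖} ↔
      BddAbove {y : ℝ | ∃ z ∈ ball (0:ℂ) 1, y = (1 - ‖z‖^2) * ‖Phgε z‖}) ∧
    (BddAbove {y : ℝ | ∃ z ∈ ball (0:ℂ) 1, y = (1 - ‖z‖^2) * ‖Pf z‖} →
      |sSup {y : ℝ | ∃ z ∈ ball (0:ℂ) 1, y = (1 - ‖z‖^2) * ‖Pf z‖} -
        sSup {y : ℝ | ∃ z ∈ ball (0:ℂ) 1, y = (1 - ‖z‖^2) * ‖Phgε z‖}|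
        ≤ 1 + ‖(1 : ℂ) - ε‖ * β) := by
  -- ω is differentiable on the ball
  have hωd : DifferentiableOn ℂ ω (ball (0:ℂ) 1) := by
    have hgd : DifferentiableOn ℂ (deriv g) (ball (0:ℂ) 1) :=
      ((hg.analyticOnNhd isOpen_ball).deriv).differentiableOn
    have hhd : DifferentiableOn ℂ (deriv h) (ball (0:ℂ) 1) :=
      ((hh.analyticOnNhd isOpen_ball).deriv).differentiableOn
    exact DifferentiableOn.congr (((hgd.mul hh).div (hhd.mul hg) hh'g0)) hω
  have hSP : ∀ z ∈ ball (0:ℂ) 1, (1 - ‖z‖^2) * ‖deriv ω z‖ ≤ 1 - ‖ω z‖^2 :=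
    fun z hz => schwarzPick ω hωd hωmap hz
  set C : ℝ := 1 + ‖(1 : ℂ) - ε‖ * β with hC
  -- part 1: the pointwise estimate
  have part1 : ∀ z ∈ ball (0:ℂ) 1,
      (1 - ‖z‖^2) * |‖Phgε z‖ - ‖Pf z‖| ≤ C := by
    intro z hz
    have hz1 : ‖z‖ < 1 := by simpa using hz
    have hz0 : (0:ℝ) ≤ 1 - ‖z‖^2 := by nlinarith [norm_nonneg z]
    set w := ω z with hwdef
    set u := deriv ω z with hudef
    set q := deriv g z / g z with hqdef
    have hw1 : ‖w‖ < 1 := hωmap z hz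
    have hw0 : (0:ℝ) < 1 - ‖w‖^2 := by nlinarith [norm_nonneg w]
    have h1e : (1:ℂ) + ε * w ≠ 0 := by
      apply one_add_ne_zero'
      rw [norm_mul]
      nlinarith [norm_nonneg ε, norm_nonneg w]
    have hcw : ((‖w‖:ℂ))^2 = w * conj w := by
      rw [mul_conj]; norm_cast; rw [normSq_eq_norm_sq]
    have hw2 : (1:ℂ) - (‖w‖:ℂ)^2 ≠ 0 := by
      have : (1:ℂ) - (‖w‖:ℂ)^2 = ((1 - ‖w‖^2 : ℝ) : ℂ) := by push_cast; ring
      rw [this]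
      norm_cast
      exact ne_of_gt hw0
    have hw2' : (1:ℂ) - w * conj w ≠ 0 := by rwa [hcw] at hw2
    -- the key algebraic identity
    have hdiff : Phgε z - Pf z =
        (ε - 1) * q + ((ε + conj w) / (1 + ε * w)) * (u / (1 - (‖w‖:ℂ)^2)) := by
      rw [hPhgε z hz, hPf z hz, ← hwdef, ← hudef, ← hqdef, hcw]
      field_simp
      ring
    -- norm estimate
    have hquot : ‖(ε + conj w) / (1 + ε * w)‖ ≤ 1 := by
      rw [norm_div, div_le_one (norm_pos_iff.mpr h1e)]
      exact quot_le_one' hε hw1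
    have hden_norm : ‖(1:ℂ) - (‖w‖:ℂ)^2‖ = 1 - ‖w‖^2 := by
      have : (1:ℂ) - (‖w‖:ℂ)^2 = ((1 - ‖w‖^2 : ℝ) : ℂ) := by push_cast; ring
      rw [this, Complex.norm_real, Real.norm_eq_abs, _root_.abs_of_nonneg (le_of_lt hw0)]
    have hnorm : ‖Phgε z - Pf z‖ ≤ ‖(1:ℂ) - ε‖ * ‖q‖ + ‖u‖ / (1 - ‖w‖^2) := by
      rw [hdiff]
      refine (norm_add_le _ _).trans ?_
      apply add_le_add
      · rw [norm_mul, norm_sub_rev]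
      · rw [norm_mul, show ‖u / (1 - (‖w‖:ℂ)^2)‖ = ‖u‖ / (1 - ‖w‖^2) by
          rw [norm_div, hden_norm]]
        have h2 : (0:ℝ) ≤ ‖u‖ / (1 - ‖w‖^2) := div_nonneg (norm_nonneg u) (le_of_lt hw0)
        calc ‖(ε + conj w) / (1 + ε * w)‖ * (‖u‖ / (1 - ‖w‖^2))
            ≤ 1 * (‖u‖ / (1 - ‖w‖^2)) := mul_le_mul_of_nonneg_right hquot h2
          _ = ‖u‖ / (1 - ‖w‖^2) := one_mul _
    -- multiply by (1 - ‖z‖²)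
    have hβz : (1 - ‖z‖^2) * ‖q‖ ≤ β := by
      rw [hβ]
      exact le_csSup hβbdd ⟨z, hz, rfl⟩
    have e1 : (1 - ‖z‖^2) * |‖Phgε z‖ - ‖Pf z‖| ≤ (1 - ‖z‖^2) * ‖Phgε z - Pf z‖ :=
      mul_le_mul_of_nonneg_left (abs_norm_sub_norm_le _ _) hz0
    have e2 : (1 - ‖z‖^2) * ‖Phgε z - Pf z‖ ≤
        (1 - ‖z‖^2) * (‖(1:ℂ) - ε‖ * ‖q‖) + (1 - ‖z‖^2) * (‖u‖ / (1 - ‖w‖^2)) := by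
      rw [← mul_add]
      exact mul_le_mul_of_nonneg_left hnorm hz0
    have e3 : (1 - ‖z‖^2) * (‖(1:ℂ) - ε‖ * ‖q‖) ≤ ‖(1:ℂ) - ε‖ * β := by
      have : (1 - ‖z‖^2) * (‖(1:ℂ) - ε‖ * ‖q‖) = ‖(1:ℂ) - ε‖ * ((1 - ‖z‖^2) * ‖q‖) := by ring
      rw [this]
      exact mul_le_mul_of_nonneg_left hβz (norm_nonneg _)
    have e4 : (1 - ‖z‖^2) * (‖u‖ / (1 - ‖w‖^2)) ≤ 1 := by
      rw [mul_div_assoc']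
      exact (div_le_one hw0).mpr (hSP z hz)
    linarith
  refine ⟨part1, ?_, ?_⟩
  · constructor
    · intro hA
      refine (transfer_sup (P := fun z => (1 - ‖z‖^2) * ‖Phgε z‖)
        (Q := fun z => (1 - ‖z‖^2) * ‖Pf z‖) (C := C) ?_ hA).1
      intro z hz
      show (1 - ‖z‖^2) * ‖Phgε z‖ ≤ (1 - ‖z‖^2) * ‖Pf z‖ + C
      have hz0 : (0:ℝ) ≤ 1 - ‖z‖^2 := by nlinarith [norm_nonneg z, (by simpa using hz : ‖z‖ < 1)]
      have t1 : ‖Phgε z‖ - ‖Pf z‖ ≤ |‖Phgε z‖ - ‖Pf z‖| := le_abs_self _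
      have t2 := mul_le_mul_of_nonneg_left t1 hz0
      rw [mul_sub] at t2
      linarith [part1 z hz]
    · intro hB
      refine (transfer_sup (P := fun z => (1 - ‖z‖^2) * ‖Pf z‖)
        (Q := fun z => (1 - ‖z‖^2) * ‖Phgε z‖) (C := C) ?_ hB).1
      intro z hz
      show (1 - ‖z‖^2) * ‖Pf z‖ ≤ (1 - ‖z‖^2) * ‖Phgε z‖ + C
      have hz0 : (0:ℝ) ≤ 1 - ‖z‖^2 := by nlinarith [norm_nonneg z, (by simpa using hz : ‖z‖ < 1)]
      have t1 : ‖Pf z‖ - ‖Phgε z‖ ≤ |‖Phgε z‖ - ‖Pf z‖| := by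
        rw [abs_sub_comm]; exact le_abs_self _
      have t2 := mul_le_mul_of_nonneg_left t1 hz0
      rw [mul_sub] at t2
      linarith [part1 z hz]
  · intro hA
    have hPQ : ∀ z ∈ ball (0:ℂ) 1,
        (1 - ‖z‖^2) * ‖Pf z‖ ≤ (1 - ‖z‖^2) * ‖Phgε z‖ + C := by
      intro z hz
      have hz0 : (0:ℝ) ≤ 1 - ‖z‖^2 := by nlinarith [norm_nonneg z, (by simpa using hz : ‖z‖ < 1)]
      have t1 : ‖Pf z‖ - ‖Phgε z‖ ≤ |‖Phgε z‖ - ‖Pf z‖| := by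
        rw [abs_sub_comm]; exact le_abs_self _
      have t2 := mul_le_mul_of_nonneg_left t1 hz0
      rw [mul_sub] at t2
      linarith [part1 z hz]
    have hQP : ∀ z ∈ ball (0:ℂ) 1,
        (1 - ‖z‖^2) * ‖Phgε z‖ ≤ (1 - ‖z‖^2) * ‖Pf z‖ + C := by
      intro z hz
      have hz0 : (0:ℝ) ≤ 1 - ‖z‖^2 := by nlinarith [norm_nonneg z, (by simpa using hz : ‖z‖ < 1)]
      have t1 : ‖Phgε z‖ - ‖Pf z‖ ≤ |‖Phgε z‖ - ‖Pf z‖| := le_abs_self _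
      have t2 := mul_le_mul_of_nonneg_left t1 hz0
      rw [mul_sub] at t2
      linarith [part1 z hz]
    have hB := (transfer_sup (P := fun z => (1 - ‖z‖^2) * ‖Phgε z‖)
      (Q := fun z => (1 - ‖z‖^2) * ‖Pf z‖) (C := C) hQP hA).1
    have s1 := (transfer_sup (P := fun z => (1 - ‖z‖^2) * ‖Pf z‖)
      (Q := fun z => (1 - ‖z‖^2) * ‖Phgε z‖) (C := C) hPQ hB).2
    have s2 := (transfer_sup (P := fun z => (1 - ‖z‖^2) * ‖Phgε z‖)
      (Q := fun z => (1 - ‖z‖^2) * ‖Pf z‖) (C := C) hQP hA).2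
    rw [abs_sub_le_iff]
    constructor <;> linarith
end

section
/- The constant 1 in the pre-Schwarzian comparison is sharp: for h(z) = exp(z/(1-z)) and g(z) = exp(-z/(1-z))/(1-z), the log-harmonic mapping f = h·conj(g) has ‖P_f‖ = 5 and ‖P_{hg}‖ = 4, so |‖P_f‖ - ‖P_{hg}‖| = 1. -/
open Complex Metric ComplexConjugate

noncomputable def hh : ℂ → ℂ := fun z => Complex.exp (z / (1 - z))
noncomputable def gg : ℂ → ℂ := fun z => Complex.exp (-z / (1 - z)) / (1 - z)

lemma hd_frac (z:ℂ) (hz : z ≠ 1) : HasDerivAt (fun w : ℂ => w/(1-w)) (((1-z)^2)⁻¹) z := by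
  have h1 : (1:ℂ) - z ≠ 0 := sub_ne_zero.mpr hz.symm
  have hs : HasDerivAt (fun w : ℂ => 1 - w) (-1) z := (hasDerivAt_id z).const_sub 1
  have := (hasDerivAt_id z).div hs h1
  refine this.congr_deriv ?_
  field_simp
  simp

lemma hd_nfrac (z:ℂ) (hz : z ≠ 1) : HasDerivAt (fun w : ℂ => -w/(1-w)) (-((1-z)^2)⁻¹) z := by
  have h1 : (1:ℂ) - z ≠ 0 := sub_ne_zero.mpr hz.symm
  have hs : HasDerivAt (fun w : ℂ => 1 - w) (-1) z := (hasDerivAt_id z).const_sub 1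
  have := ((hasDerivAt_id z).neg).div hs h1
  refine this.congr_deriv ?_
  field_simp
  simp

lemma hd_inv (z:ℂ) (hz : z ≠ 1) : HasDerivAt (fun w : ℂ => (1-w)⁻¹) (((1-z)^2)⁻¹) z := by
  have h1 : (1:ℂ) - z ≠ 0 := sub_ne_zero.mpr hz.symm
  have hs : HasDerivAt (fun w : ℂ => 1 - w) (-1) z := (hasDerivAt_id z).const_sub 1
  have := hs.inv h1
  refine this.congr_deriv ?_
  field_simp

lemma hd_h (z:ℂ) (hz : z ≠ 1) : HasDerivAt hh (hh z * ((1-z)^2)⁻¹) z := by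
  have := (hd_frac z hz).cexp
  exact this

lemma hd_g (z:ℂ) (hz : z ≠ 1) : HasDerivAt gg (gg z * (-z) * ((1-z)^2)⁻¹) z := by
  have h1 : (1:ℂ) - z ≠ 0 := sub_ne_zero.mpr hz.symm
  have he := (hd_nfrac z hz).cexp
  have := he.mul (hd_inv z hz)
  refine this.congr_deriv ?_
  unfold gg
  field_simp
  ring

lemma deriv_h (z:ℂ) (hz : z ≠ 1) : deriv hh z = hh z * ((1-z)^2)⁻¹ := (hd_h z hz).deriv
lemma deriv_g (z:ℂ) (hz : z ≠ 1) : deriv gg z = gg z * (-z) * ((1-z)^2)⁻¹ := (hd_g z hz).deriv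

lemma hd_invsq (z:ℂ) (hz : z ≠ 1) :
    HasDerivAt (fun w : ℂ => ((1-w)^2)⁻¹) (2 * ((1-z)^3)⁻¹) z := by
  have h1 : (1:ℂ) - z ≠ 0 := sub_ne_zero.mpr hz.symm
  have hs : HasDerivAt (fun w : ℂ => 1 - w) (-1) z := (hasDerivAt_id z).const_sub 1
  have hsq := hs.pow 2
  have := hsq.inv (pow_ne_zero 2 h1)
  refine this.congr_deriv ?_
  simp only [Pi.pow_apply]
  field_simp
  ring

lemma deriv2_h (z:ℂ) (hz : z ≠ 1) :
    deriv (deriv hh) z = hh z * (((1-z)^4)⁻¹ + 2 * ((1-z)^3)⁻¹) := by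
  have h1 : (1:ℂ) - z ≠ 0 := sub_ne_zero.mpr hz.symm
  have heq : deriv hh =ᶠ[nhds z] fun w => hh w * ((1-w)^2)⁻¹ := by
    filter_upwards [isOpen_ne.mem_nhds hz] with w hw
    exact deriv_h w hw
  rw [heq.deriv_eq]
  have := ((hd_h z hz).mul (hd_invsq z hz)).deriv
  erw [this]
  field_simp

lemma hg_eq : (fun w => hh w * gg w) = fun w : ℂ => (1-w)⁻¹ := by
  funext w
  unfold hh gg
  rw [mul_div_assoc', ← Complex.exp_add]
  have : w / (1 - w) + -w / (1 - w) = 0 := by rw [← add_div]; simp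
  rw [this, Complex.exp_zero, one_div]

lemma deriv_hg (z:ℂ) (hz : z ≠ 1) :
    deriv (fun w => hh w * gg w) z = ((1-z)^2)⁻¹ := by
  rw [hg_eq]; exact (hd_inv z hz).deriv

lemma deriv2_hg (z:ℂ) (hz : z ≠ 1) :
    deriv (deriv (fun w => hh w * gg w)) z = 2 * ((1-z)^3)⁻¹ := by
  rw [hg_eq]
  have heq : deriv (fun w : ℂ => (1-w)⁻¹) =ᶠ[nhds z] fun w => ((1-w)^2)⁻¹ := by
    filter_upwards [isOpen_ne.mem_nhds hz] with w hw
    exact (hd_inv w hw).deriv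
  rw [heq.deriv_eq]
  exact (hd_invsq z hz).deriv

lemma h_ne (z:ℂ) : hh z ≠ 0 := Complex.exp_ne_zero _
lemma g_ne (z:ℂ) (hz : z ≠ 1) : gg z ≠ 0 := by
  have h1 : (1:ℂ) - z ≠ 0 := sub_ne_zero.mpr hz.symm
  exact div_ne_zero (Complex.exp_ne_zero _) h1

lemma omega_eq (z:ℂ) (hz : z ≠ 1) :
    deriv gg z * hh z / (deriv hh z * gg z) = -z := by
  have h1 : (1:ℂ) - z ≠ 0 := sub_ne_zero.mpr hz.symm
  rw [deriv_h z hz, deriv_g z hz]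
  field_simp [h_ne, g_ne z hz]

lemma deriv_omega (z:ℂ) (hz : z ≠ 1) :
    deriv (fun w => deriv gg w * hh w / (deriv hh w * gg w)) z = -1 := by
  have heq : (fun w => deriv gg w * hh w / (deriv hh w * gg w)) =ᶠ[nhds z]
      fun w : ℂ => -w := by
    filter_upwards [isOpen_ne.mem_nhds hz] with w hw
    exact omega_eq w hw
  rw [heq.deriv_eq]
  exact ((hasDerivAt_id z).neg).deriv

lemma Pf_eq (z:ℂ) (hz : z ≠ 1) (hn : (1:ℂ) - (‖z‖:ℂ)^2 ≠ 0) :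
    deriv (deriv hh) z / deriv hh z + deriv gg z / gg z -
      conj (deriv gg z * hh z / (deriv hh z * gg z)) *
        deriv (fun w => deriv gg w * hh w / (deriv hh w * gg w)) z /
          (1 - (‖deriv gg z * hh z / (deriv hh z * gg z)‖ : ℂ)^2) =
    3*(1-z)⁻¹ - conj z * ((1:ℂ) - (‖z‖:ℂ)^2)⁻¹ := by
  have h1 : (1:ℂ) - z ≠ 0 := sub_ne_zero.mpr hz.symm
  rw [deriv_omega z hz, omega_eq z hz, deriv2_h z hz, deriv_h z hz, deriv_g z hz,
    norm_neg]
  have e1 : hh z * (((1-z)^4)⁻¹ + 2*((1-z)^3)⁻¹) / (hh z * ((1-z)^2)⁻¹)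
      = ((1-z)^2)⁻¹ + 2*(1-z)⁻¹ := by
    rw [mul_div_mul_left _ _ (h_ne z)]
    field_simp
  have e2 : gg z * (-z) * ((1-z)^2)⁻¹ / gg z = -z * ((1-z)^2)⁻¹ := by
    field_simp [g_ne z hz]
  rw [e1, e2]
  simp only [map_neg]
  field_simp [h1, hn]
  ring

lemma Phg_eq (z:ℂ) (hz : z ≠ 1) :
    deriv (deriv (fun w => hh w * gg w)) z / deriv (fun w => hh w * gg w) z
      = 2 * (1-z)⁻¹ := by
  have h1 : (1:ℂ) - z ≠ 0 := sub_ne_zero.mpr hz.symm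
  rw [deriv2_hg z hz, deriv_hg z hz]
  field_simp

lemma norm_sq_expand (w : ℂ) : ‖w‖^2 = w.re*w.re + w.im*w.im := by
  rw [Complex.sq_norm, Complex.normSq_apply]

lemma key_sq (z : ℂ) (hz : ‖z‖ < 1) :
    ‖((3 - 2*‖z‖^2 : ℝ):ℂ) - conj z‖^2 ≤ (5*‖1-z‖)^2 := by
  have hx : z.re ≤ ‖z‖ := by exact Complex.re_le_norm z
  have hρ : ‖z‖^2 = z.re*z.re + z.im*z.im := norm_sq_expand z
  have h0 : (0:ℝ) ≤ ‖z‖ := norm_nonneg z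
  rw [mul_pow, norm_sq_expand (1-z), norm_sq_expand (((3 - 2*‖z‖^2 : ℝ):ℂ) - conj z)]
  simp only [Complex.sub_re, Complex.sub_im, Complex.ofReal_re, Complex.ofReal_im,
    Complex.conj_re, Complex.conj_im, Complex.one_re, Complex.one_im]
  have h1 : 0 ≤ 1 - 2*z.re + ‖z‖^2 := by nlinarith [sq_nonneg (1-z.re), sq_nonneg z.im]
  have h2 : 0 ≤ 4 - 3*z.re - ‖z‖^2 := by nlinarith [sq_nonneg ‖z‖]
  nlinarith [mul_nonneg h1 h2, sq_nonneg z.im]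

lemma key_sq2 (z : ℂ) (hz : ‖z‖ < 1) :
    ‖((2 - 2*‖z‖^2 : ℝ):ℂ)‖^2 ≤ (4*‖1-z‖)^2 := by
  have hx : z.re ≤ ‖z‖ := by exact Complex.re_le_norm z
  have hρ : ‖z‖^2 = z.re*z.re + z.im*z.im := norm_sq_expand z
  have h0 : (0:ℝ) ≤ ‖z‖ := norm_nonneg z
  rw [mul_pow, norm_sq_expand (1-z), norm_sq_expand (((2 - 2*‖z‖^2 : ℝ):ℂ))]
  simp only [Complex.sub_re, Complex.sub_im, Complex.ofReal_re, Complex.ofReal_im,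
    Complex.conj_re, Complex.conj_im, Complex.one_re, Complex.one_im]
  have h4 : 0 ≤ 1 - ‖z‖ := by linarith
  nlinarith [mul_nonneg (mul_nonneg (mul_nonneg h4 h4) h4) (by linarith : (0:ℝ) ≤ 3 + ‖z‖), hx]

lemma sq_le_of (a b : ℝ) (ha : 0 ≤ a) (hb : 0 ≤ b) (h : a^2 ≤ b^2) : a ≤ b := by
  nlinarith

lemma cast_ne (z : ℂ) (hz : ‖z‖ < 1) : ((1:ℂ) - (‖z‖:ℂ)^2) ≠ 0 := by
  have hρ : (0:ℝ) < 1 - ‖z‖^2 := by nlinarith [norm_nonneg z]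
  have : ((1 - ‖z‖^2 : ℝ):ℂ) = 1 - (‖z‖:ℂ)^2 := by push_cast; ring
  rw [← this]
  exact_mod_cast ne_of_gt hρ

lemma Pf_bound (z:ℂ) (hz : ‖z‖ < 1) :
    (1 - ‖z‖^2) * ‖3*(1-z)⁻¹ - conj z * ((1:ℂ)-(‖z‖:ℂ)^2)⁻¹‖ ≤ 5 := by
  have hz1 : z ≠ 1 := by intro h; rw [h] at hz; simp at hz
  have h1 : (1:ℂ) - z ≠ 0 := sub_ne_zero.mpr hz1.symm
  have hρ : (0:ℝ) < 1 - ‖z‖^2 := by nlinarith [norm_nonneg z]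
  have hnc := cast_ne z hz
  have key : ((1-‖z‖^2 : ℝ):ℂ) * (3*(1-z)⁻¹ - conj z * ((1:ℂ)-(‖z‖:ℂ)^2)⁻¹)
      = (((3 - 2*‖z‖^2:ℝ):ℂ) - conj z) / (1-z) := by
    have hm := Complex.mul_conj' z
    have hc : ((1-‖z‖^2:ℝ):ℂ) = 1 - (‖z‖:ℂ)^2 := by push_cast; ring
    have hc2 : ((3-2*‖z‖^2:ℝ):ℂ) = 3 - 2*(‖z‖:ℂ)^2 := by push_cast; ring
    rw [hc, hc2, ← hm]
    rw [← hm] at hnc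
    field_simp [hnc]
    ring
  have hnum := key_sq z hz
  have hle : ‖(((3 - 2*‖z‖^2:ℝ):ℂ) - conj z)‖ ≤ 5*‖1-z‖ :=
    sq_le_of _ _ (norm_nonneg _) (by positivity) hnum
  calc (1 - ‖z‖^2) * ‖3*(1-z)⁻¹ - conj z * ((1:ℂ)-(‖z‖:ℂ)^2)⁻¹‖
      = ‖((1-‖z‖^2 : ℝ):ℂ) * (3*(1-z)⁻¹ - conj z * ((1:ℂ)-(‖z‖:ℂ)^2)⁻¹)‖ := by
        rw [norm_mul, Complex.norm_real, Real.norm_of_nonneg hρ.le]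
    _ = ‖(((3 - 2*‖z‖^2:ℝ):ℂ) - conj z)‖ / ‖1-z‖ := by rw [key, norm_div]
    _ ≤ 5 := by
        rw [div_le_iff₀ (norm_pos_iff.mpr h1)]
        linarith [hle]

lemma Phg_bound (z:ℂ) (hz : ‖z‖ < 1) :
    (1 - ‖z‖^2) * ‖2*(1-z)⁻¹‖ ≤ 4 := by
  have hz1 : z ≠ 1 := by intro h; rw [h] at hz; simp at hz
  have h1 : (1:ℂ) - z ≠ 0 := sub_ne_zero.mpr hz1.symm
  have hρ : (0:ℝ) < 1 - ‖z‖^2 := by nlinarith [norm_nonneg z]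
  have key : ((1-‖z‖^2 : ℝ):ℂ) * (2*(1-z)⁻¹) = ((2 - 2*‖z‖^2:ℝ):ℂ) / (1-z) := by
    push_cast
    field_simp
  have hle : ‖((2 - 2*‖z‖^2:ℝ):ℂ)‖ ≤ 4*‖1-z‖ :=
    sq_le_of _ _ (norm_nonneg _) (by positivity) (key_sq2 z hz)
  calc (1 - ‖z‖^2) * ‖2*(1-z)⁻¹‖
      = ‖((1-‖z‖^2 : ℝ):ℂ) * (2*(1-z)⁻¹)‖ := by
        rw [norm_mul ((1-‖z‖^2 : ℝ):ℂ), Complex.norm_real, Real.norm_of_nonneg hρ.le]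
    _ = ‖((2 - 2*‖z‖^2:ℝ):ℂ)‖ / ‖1-z‖ := by rw [key, norm_div]
    _ ≤ 4 := by
        rw [div_le_iff₀ (norm_pos_iff.mpr h1)]
        linarith [hle]

lemma Pf_val (r : ℝ) (h0 : 0 ≤ r) (h1 : r < 1) :
    (1 - ‖(r:ℂ)‖^2) * ‖3*(1-(r:ℂ))⁻¹ - conj (r:ℂ) * ((1:ℂ)-(‖(r:ℂ)‖:ℂ)^2)⁻¹‖
      = 3 + 2*r := by
  have hr : ‖(r:ℂ)‖ = r := by
    rw [Complex.norm_real, Real.norm_of_nonneg h0]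
  have hd1 : (1:ℝ) - r ≠ 0 := by nlinarith
  have hd2 : (1:ℝ) - r^2 ≠ 0 := by nlinarith
  have hc1 : (1:ℂ) - (r:ℂ) ≠ 0 := by exact_mod_cast hd1
  have hc2 : (1:ℂ) - (r:ℂ)^2 ≠ 0 := by exact_mod_cast hd2
  have hval : 3*(1-(r:ℂ))⁻¹ - conj (r:ℂ) * ((1:ℂ)-((r:ℝ):ℂ)^2)⁻¹
      = (((3+2*r)/(1-r^2) : ℝ) : ℂ) := by
    rw [Complex.conj_ofReal]
    push_cast
    field_simp
    ring
  rw [hr, hval, Complex.norm_real,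
    Real.norm_of_nonneg (div_nonneg (by linarith) (by nlinarith))]
  field_simp

lemma Phg_val (r : ℝ) (h0 : 0 ≤ r) (h1 : r < 1) :
    (1 - ‖(r:ℂ)‖^2) * ‖2*(1-(r:ℂ))⁻¹‖ = 2 + 2*r := by
  have hr : ‖(r:ℂ)‖ = r := by
    rw [Complex.norm_real, Real.norm_of_nonneg h0]
  have hd1 : (1:ℝ) - r ≠ 0 := by nlinarith
  have hc1 : (1:ℂ) - (r:ℂ) ≠ 0 := by exact_mod_cast hd1
  have hval : 2*(1-(r:ℂ))⁻¹ = (((2/(1-r)) : ℝ) : ℂ) := by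
    push_cast
    field_simp
  rw [hr, hval, Complex.norm_real,
    Real.norm_of_nonneg (div_nonneg (by norm_num) (by linarith))]
  field_simp
  ring

lemma sup_Pf :
    sSup {y : ℝ | ∃ z ∈ ball (0:ℂ) 1, y =
      (1 - ‖z‖^2) * ‖3*(1-z)⁻¹ - conj z * ((1:ℂ)-(‖z‖:ℂ)^2)⁻¹‖} = 5 := by
  apply csSup_eq_of_forall_le_of_forall_lt_exists_gt
  · exact ⟨_, ⟨0, by simp, rfl⟩⟩
  · rintro a ⟨z, hzb, rfl⟩
    exact Pf_bound z (mem_ball_zero_iff.mp hzb)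
  · intro w hw
    set r : ℝ := max (1/2) ((w-1)/4) with hrdef
    have hr0 : 0 ≤ r := le_trans (by norm_num) (le_max_left _ _)
    have hr1 : r < 1 := max_lt (by norm_num) (by linarith)
    have hrc : ‖(r:ℂ)‖ < 1 := by
      rw [Complex.norm_real, Real.norm_of_nonneg hr0]
      exact hr1
    refine ⟨_, ⟨(r:ℂ), mem_ball_zero_iff.mpr hrc, rfl⟩, ?_⟩
    rw [Pf_val r hr0 hr1]
    have := le_max_right (1/2 : ℝ) ((w-1)/4)
    linarith

lemma sup_Phg :
    sSup {y : ℝ | ∃ z ∈ ball (0:ℂ) 1, y = (1 - ‖z‖^2) * ‖2*(1-z)⁻¹‖} = 4 := by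
  apply csSup_eq_of_forall_le_of_forall_lt_exists_gt
  · exact ⟨_, ⟨0, by simp, rfl⟩⟩
  · rintro a ⟨z, hzb, rfl⟩
    exact Phg_bound z (mem_ball_zero_iff.mp hzb)
  · intro w hw
    set r : ℝ := max (1/2) (w/4) with hrdef
    have hr0 : 0 ≤ r := le_trans (by norm_num) (le_max_left _ _)
    have hr1 : r < 1 := max_lt (by norm_num) (by linarith)
    have hrc : ‖(r:ℂ)‖ < 1 := by
      rw [Complex.norm_real, Real.norm_of_nonneg hr0]
      exact hr1
    refine ⟨_, ⟨(r:ℂ), mem_ball_zero_iff.mpr hrc, rfl⟩, ?_⟩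
    rw [Phg_val r hr0 hr1]
    have := le_max_right (1/2 : ℝ) (w/4)
    linarith

theorem preSchwarzian_comparison_sharpness :
    let h : ℂ → ℂ := fun z => Complex.exp (z / (1 - z))
    let g : ℂ → ℂ := fun z => Complex.exp (-z / (1 - z)) / (1 - z)
    let ω : ℂ → ℂ := fun z => deriv g z * h z / (deriv h z * g z)
    let Pf : ℂ → ℂ := fun z =>
      deriv (deriv h) z / deriv h z + deriv g z / g z -
        conj (ω z) * deriv ω z / (1 - (‖ω z‖ : ℂ)^2)
    let Phg : ℂ → ℂ := fun z =>
      deriv (deriv (fun w => h w * g w)) z / deriv (fun w => h w * g w) z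
    sSup {y : ℝ | ∃ z ∈ ball (0:ℂ) 1, y = (1 - ‖z‖^2) * ‖Pf z‖} = 5 ∧
    sSup {y : ℝ | ∃ z ∈ ball (0:ℂ) 1, y = (1 - ‖z‖^2) * ‖Phg z‖} = 4 ∧
    |sSup {y : ℝ | ∃ z ∈ ball (0:ℂ) 1, y = (1 - ‖z‖^2) * ‖Pf z‖} -
      sSup {y : ℝ | ∃ z ∈ ball (0:ℂ) 1, y = (1 - ‖z‖^2) * ‖Phg z‖}| = 1 := by
  intro h g ω Pf Phg
  have hne1 : ∀ z : ℂ, ‖z‖ < 1 → z ≠ 1 := by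
    intro z hz hzz; rw [hzz] at hz; simp at hz
  have hPf : ∀ z : ℂ, z ∈ ball (0:ℂ) 1 →
      Pf z = 3*(1-z)⁻¹ - conj z * ((1:ℂ)-(‖z‖:ℂ)^2)⁻¹ := by
    intro z hz
    have hz' := mem_ball_zero_iff.mp hz
    exact Pf_eq z (hne1 z hz') (cast_ne z hz')
  have hPhg : ∀ z : ℂ, z ∈ ball (0:ℂ) 1 → Phg z = 2*(1-z)⁻¹ := by
    intro z hz
    exact Phg_eq z (hne1 z (mem_ball_zero_iff.mp hz))
  have hset1 : {y : ℝ | ∃ z ∈ ball (0:ℂ) 1, y = (1 - ‖z‖^2) * ‖Pf z‖}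
      = {y : ℝ | ∃ z ∈ ball (0:ℂ) 1, y =
          (1 - ‖z‖^2) * ‖3*(1-z)⁻¹ - conj z * ((1:ℂ)-(‖z‖:ℂ)^2)⁻¹‖} := by
    ext y
    simp only [Set.mem_setOf_eq]
    constructor <;> rintro ⟨z, hz, rfl⟩ <;> exact ⟨z, hz, by rw [hPf z hz]⟩
  have hset2 : {y : ℝ | ∃ z ∈ ball (0:ℂ) 1, y = (1 - ‖z‖^2) * ‖Phg z‖}
      = {y : ℝ | ∃ z ∈ ball (0:ℂ) 1, y = (1 - ‖z‖^2) * ‖2*(1-z)⁻¹‖} := by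
    ext y
    simp only [Set.mem_setOf_eq]
    constructor <;> rintro ⟨z, hz, rfl⟩ <;> exact ⟨z, hz, by rw [hPhg z hz]⟩
  rw [hset1, hset2, sup_Pf, sup_Phg]
  norm_num
end

section
/- Let ω : 𝔻 → 𝔻 be holomorphic and satisfy (1 - |ω(z)|²)·ω''(z) + 2·ω'(z)²·conj(ω(z)) = 0 for all z in some open disk D ⊆ 𝔻. Then ω' ≡ 0 on D (and hence, if D is an open subset of the connected domain 𝔻, ω is constant on 𝔻 by the identity theorem). -/
open Complex Metric ComplexConjugate

/-- If `f` and `conj ∘ f` are both complex-differentiable at a point, then `f` has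
zero derivative there. -/
lemma deriv_zero_of_conj_hasDerivAt {f : ℂ → ℂ} {z a b : ℂ}
    (hf : HasDerivAt f a z) (hg : HasDerivAt (fun w => conj (f w)) b z) : a = 0 := by
  have hA : HasFDerivAt f
      ((ContinuousLinearMap.smulRight (1 : ℂ →L[ℂ] ℂ) a).restrictScalars ℝ) z :=
    hf.hasFDerivAt.restrictScalars ℝ
  have hconj : HasFDerivAt (fun w : ℂ => (conj w : ℂ))
      (Complex.conjCLE.toContinuousLinearMap) (f z) :=
    Complex.conjCLE.toContinuousLinearMap.hasFDerivAt
  have hcomp : HasFDerivAt (fun w => conj (f w))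
      (Complex.conjCLE.toContinuousLinearMap.comp
        ((ContinuousLinearMap.smulRight (1 : ℂ →L[ℂ] ℂ) a).restrictScalars ℝ)) z :=
    hconj.comp z hA
  have hB : HasFDerivAt (fun w => conj (f w))
      ((ContinuousLinearMap.smulRight (1 : ℂ →L[ℂ] ℂ) b).restrictScalars ℝ) z :=
    hg.hasFDerivAt.restrictScalars ℝ
  have heq := hcomp.unique hB
  have h1 := DFunLike.congr_fun heq (1 : ℂ)
  have hI := DFunLike.congr_fun heq (I : ℂ)
  simp only [ContinuousLinearMap.coe_comp', ContinuousLinearMap.coe_restrictScalars',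
    Function.comp_apply, ContinuousLinearMap.smulRight_apply, ContinuousLinearMap.one_apply,
    smul_eq_mul, ContinuousLinearEquiv.coe_coe, Complex.conjCLE_apply, one_mul] at h1 hI
  rw [map_mul] at hI
  simp only [Complex.conj_I] at hI
  -- h1 : conj a = b ; hI : -I * conj a = I * b
  rw [← h1] at hI
  have : (2 : ℂ) * I * conj a = 0 := by linear_combination -hI
  have ha : (starRingEnd ℂ) a = 0 := by
    field_simp at this
    simpa using this
  simpa using congrArg (starRingEnd ℂ) ha

theorem dilatation_ode_forces_constant
    (ω : ℂ → ℂ) (hω : DifferentiableOn ℂ ω (ball (0:ℂ) 1))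
    (hωmap : ∀ z ∈ ball (0:ℂ) 1, ‖ω z‖ < 1)
    (z₀ : ℂ) (r : ℝ) (hr : 0 < r)
    (hD : ball z₀ r ⊆ ball (0:ℂ) 1)
    (hode : ∀ z ∈ ball z₀ r,
      (1 - (‖ω z‖ : ℂ)^2) * deriv (deriv ω) z +
        2 * (deriv ω z)^2 * conj (ω z) = 0) :
    (∀ z ∈ ball z₀ r, deriv ω z = 0) ∧
    ∃ c : ℂ, ∀ z ∈ ball (0:ℂ) 1, ω z = c := by
  have hopen : IsOpen (ball (0:ℂ) 1) := isOpen_ball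
  have hDopen : IsOpen (ball z₀ r) := isOpen_ball
  have hAn : AnalyticOnNhd ℂ ω (ball (0:ℂ) 1) := hω.analyticOnNhd hopen
  have hAn' : AnalyticOnNhd ℂ (deriv ω) (ball (0:ℂ) 1) := hAn.deriv
  have hAn'' : AnalyticOnNhd ℂ (deriv (deriv ω)) (ball (0:ℂ) 1) := hAn'.deriv
  set h : ℂ → ℂ := fun z => 2 * (deriv ω z)^2 - ω z * deriv (deriv ω) z with hh
  have hAnh : ∀ z ∈ ball z₀ r, AnalyticAt ℂ h z := fun z hz => by
    exact ((analyticAt_const.mul ((hAn' z (hD hz)).pow 2)).sub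
      ((hAn z (hD hz)).mul (hAn'' z (hD hz))))
  -- rewrite the ODE
  have key : ∀ z ∈ ball z₀ r, deriv (deriv ω) z = -(conj (ω z)) * h z := by
    intro z hz
    have h1 := hode z hz
    have h2 : ((‖ω z‖ : ℂ))^2 = ω z * conj (ω z) := by
      rw [Complex.mul_conj]
      norm_cast
      rw [Complex.normSq_eq_norm_sq]
    rw [h2] at h1
    simp only [hh]
    ring_nf
    ring_nf at h1
    linear_combination h1
  -- Step: h ≡ 0 on the ball
  have hzero : ∀ z ∈ ball z₀ r, h z = 0 := by
    intro z hz
    by_contra hne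
    -- set where h ≠ 0 inside the ball
    set U : Set ℂ := ball z₀ r ∩ {w | h w ≠ 0} with hU
    have hUopen : IsOpen U := by
      rw [hU]
      rw [isOpen_iff_mem_nhds]
      rintro w ⟨hw1, hw2⟩
      have hc : ContinuousAt h w := (hAnh w hw1).continuousAt
      have : ∀ᶠ x in nhds w, h x ≠ 0 := hc.eventually_ne hw2
      filter_upwards [hDopen.mem_nhds hw1, this] with x hx1 hx2 using ⟨hx1, hx2⟩
    have hzU : z ∈ U := ⟨hz, hne⟩
    -- on U, deriv ω = 0
    have hderiv0 : ∀ w ∈ U, deriv ω w = 0 := by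
      rintro w ⟨hw1, hw2⟩
      have hωd : HasDerivAt ω (deriv ω w) w := ((hAn w (hD hw1)).differentiableAt).hasDerivAt
      -- conj ∘ ω agrees near w with a differentiable function
      set g : ℂ → ℂ := fun x => -(deriv (deriv ω) x) / h x with hg
      have hgd : DifferentiableAt ℂ g w := by
        apply DifferentiableAt.div
        · exact ((hAn'' w (hD hw1)).differentiableAt).neg
        · exact (((analyticAt_const.mul ((hAn' w (hD hw1)).pow 2)).sub
            ((hAn w (hD hw1)).mul (hAn'' w (hD hw1))))).differentiableAt
        · exact hw2
      have hEq : (fun x => conj (ω x)) =ᶠ[nhds w] g := by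
        filter_upwards [hUopen.mem_nhds ⟨hw1, hw2⟩] with x ⟨hx1, hx2⟩
        have := key x hx1
        show conj (ω x) = -(deriv (deriv ω) x) / h x
        rw [eq_div_iff hx2]
        linear_combination this
      have hgder : HasDerivAt (fun x => conj (ω x)) (deriv g w) w :=
        (hgd.hasDerivAt).congr_of_eventuallyEq hEq
      exact deriv_zero_of_conj_hasDerivAt hωd hgder
    -- then deriv (deriv ω) = 0 on U, so h = 0 on U, contradiction
    have hdd : deriv (deriv ω) z = 0 := by
      have : deriv ω =ᶠ[nhds z] fun _ => (0:ℂ) := by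
        filter_upwards [hUopen.mem_nhds hzU] with x hx using hderiv0 x hx
      rw [this.deriv_eq]
      simp
    apply hne
    simp only [hh, hderiv0 z hzU, hdd]
    ring
  -- conclude deriv ω = 0 on the ball
  have hd0 : ∀ z ∈ ball z₀ r, deriv ω z = 0 := by
    intro z hz
    have h1 := key z hz
    rw [hzero z hz] at h1
    have h2 : h z = 0 := hzero z hz
    simp only [hh] at h2
    rw [mul_zero] at h1
    rw [h1, mul_zero, sub_zero] at h2
    have : (deriv ω z)^2 = 0 := by linear_combination h2 / 2
    exact pow_eq_zero_iff (by norm_num) |>.mp this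
  refine ⟨hd0, ω z₀, ?_⟩
  have hz₀ : z₀ ∈ ball z₀ r := mem_ball_self hr
  -- ω is constant on ball z₀ r
  have hconst : ∀ z ∈ ball z₀ r, ω z = ω z₀ := by
    intro z hz
    apply (convex_ball z₀ r).is_const_of_fderivWithin_eq_zero
      (hω.mono hD) _ hz hz₀
    intro x hx
    have hdiff : DifferentiableAt ℂ ω x := (hAn x (hD hx)).differentiableAt
    rw [fderivWithin_eq_fderiv (hDopen.uniqueDiffOn x hx) hdiff]
    ext w
    simp [ContinuousLinearMap.smulRight_apply, ← toSpanSingleton_deriv, hd0 x hx]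
  -- identity theorem
  intro z hz
  have := hAn.eqOn_of_preconnected_of_eventuallyEq (analyticOnNhd_const (v := ω z₀))
    (convex_ball (0:ℂ) 1).isPreconnected (hD hz₀)
    (by filter_upwards [hDopen.mem_nhds hz₀] with x hx using hconst x hx) hz
  exact this
end
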